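/- Let F = C ∩ ⁺C be the category of free objects of an O-linear heart C and its tilt ⁺C. For any morphism f in F, one has Coim_F f = Coim_C f = Im_C f and Im_F f = Im_{⁺C} f = Coim_{⁺C} f, and f induces a canonical morphism Coim_F f → Im_F f. -/

import Mathlib

open CategoryTheory Limits Triangulated Pretriangulated

variable {O : Type*} [CommRing O] [IsDomain O] [IsDiscreteValuationRing O]
variable {D : Type*} [Category D] [Preadditive D] [Linear O D] [HasZeroObject D]
  [HasShift D ℤ] [∀ n : ℤ, (CategoryTheory.shiftFunctor D n).Additive] [Pretriangulated D]

/-- The cohomology functors associated to a t-structure with their characteristic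
properties. -/
structure TCohomology (t : TStructure D) where
  H : ℤ → D ⥤ D
  mem_heart_LE : ∀ (n : ℤ) (X : D), t.le 0 ((H n).obj X)
  mem_heart_GE : ∀ (n : ℤ) (X : D), t.ge 0 ((H n).obj X)
  le_iff : ∀ (n : ℤ) (X : D), t.le n X ↔ ∀ i : ℤ, n < i → IsZero ((H i).obj X)
  ge_iff : ∀ (n : ℤ) (X : D), t.ge n X ↔ ∀ i : ℤ, i < n → IsZero ((H i).obj X)

/-- The heart of a t-structure, as a predicate on objects. -/
def heartPred (t : TStructure D) : D → Prop := fun X => t.le 0 X ∧ t.ge 0 X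

section AuxLemmas

/-- In an abelian category, the coimage-image comparison morphism is an isomorphism, for any
choice of the zero-morphism, kernel and cokernel instances. -/
lemma isIso_comparison_any {E : Type*} [Category E] [Abelian E]
    (Z : HasZeroMorphisms E) {X Y : E} (f : X ⟶ Y) (h1 : @HasCokernel E _ Z X Y f)
    (h2 : @HasKernel E _ Z X Y f) (h3 : @HasKernel E _ Z _ _ (@cokernel.π E _ Z X Y f h1))
    (h4 : @HasCokernel E _ Z _ _ (@kernel.ι E _ Z X Y f h2)) :
    IsIso (@Abelian.coimageImageComparison E _ Z X Y f h1 h2 h3 h4) := by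
  obtain rfl : Z = (Preadditive.preadditiveHasZeroMorphisms (C := E)) := Subsingleton.elim _ _
  exact inferInstance

/-- In an abelian category, the canonical morphism to the image is an epimorphism, for any
choice of the zero-morphism, kernel and cokernel instances. -/
lemma epi_factorThruImage_any {E : Type*} [Category E] [Abelian E]
    (Z : HasZeroMorphisms E) {X Y : E} (f : X ⟶ Y) (h1 : @HasCokernel E _ Z X Y f)
    (h3 : @HasKernel E _ Z _ _ (@cokernel.π E _ Z X Y f h1)) :
    Epi (@Abelian.factorThruImage E _ Z X Y f h1 h3) := by
  obtain rfl : Z = (Preadditive.preadditiveHasZeroMorphisms (C := E)) := Subsingleton.elim _ _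
  exact inferInstance

/-- The zero morphism of a full subcategory, for any choice of the zero-morphism instance,
is zero in the ambient category. -/
lemma hom_zero_any {E : Type*} [Category E] [Preadditive E] {P : ObjectProperty E}
    [Z : HasZeroMorphisms P.FullSubcategory] (X Y : P.FullSubcategory) :
    (0 : X ⟶ Y).hom = 0 := by
  have h := @zero_comp _ _ Z X Y Y (ObjectProperty.homMk (0 : Y.obj ⟶ Y.obj))
  calc (0 : X ⟶ Y).hom = ((0 : X ⟶ Y) ≫ ObjectProperty.homMk (0 : Y.obj ⟶ Y.obj)).hom := by
        rw [h]
    _ = 0 := comp_zero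

/-- Morphisms vanish from `LE a` to `GE b` when `a < b`. -/
lemma tz (t : TStructure D) {a b : ℤ} (hab : a < b) {X Y : D}
    (hX : t.le a X) (hY : t.ge b Y) (f : X ⟶ Y) : f = 0 := by
  have hX' : t.le 0 (X⟦a⟧) := t.le_shift a a 0 (by omega) X hX
  have hY' : t.ge 1 (Y⟦a⟧) :=
    t.ge_antitone (show (1:ℤ) ≤ b - a by omega) _ (t.ge_shift b a (b - a) (by omega) Y hY)
  have h0 : (shiftFunctor D a).map f = 0 := t.zero' _ hX' hY'
  exact ((shiftFunctor D a).map_eq_zero_iff).mp h0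

/-- An object receiving no nonzero morphisms from `LE (-1)` is in `GE 0`. -/
lemma geZero_of_orth (t : TStructure D) (X : D)
    (h : ∀ (A : D), t.le (-1) A → ∀ (a : A ⟶ X), a = 0) : t.ge 0 X := by
  obtain ⟨A, B, hA, hB, u, v, w, mem⟩ := t.exists_triangle X (-1) 0 (by omega)
  have hu : u = 0 := h A hA u
  have hzA : IsZero A := by
    obtain ⟨g, hg⟩ := Triangle.coyoneda_exact₂ _ (inv_rot_of_distTriang _ mem) (𝟙 A)
      (show 𝟙 A ≫ u = 0 by rw [hu, comp_zero])
    have hg0 : g = 0 := tz t (show (-1:ℤ) < 1 by omega) hA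
      (t.ge_shift 0 (-1) 1 (by omega) B hB) g
    rw [IsZero.iff_id_eq_zero, hg, hg0]
    exact zero_comp
  have : IsIso v := (Triangle.isZero₁_iff_isIso₂ _ mem).1 hzA
  exact (t.ge 0).prop_of_iso (asIso v).symm hB

/-- An object admitting no nonzero morphisms to `GE 1` is in `LE 0`. -/
lemma leZero_of_orth (t : TStructure D) (X : D)
    (h : ∀ (B : D), t.ge 1 B → ∀ (b : X ⟶ B), b = 0) : t.le 0 X := by
  obtain ⟨A, B, hA, hB, u, v, w, mem⟩ := t.exists_triangle X 0 1 (by omega)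
  have hv : v = 0 := h B hB v
  have hzB : IsZero B := by
    obtain ⟨g, hg⟩ := Triangle.yoneda_exact₂ _ (rot_of_distTriang _ mem) (𝟙 B)
      (show v ≫ 𝟙 B = 0 by rw [hv, zero_comp])
    have hg0 : g = 0 := tz t (show (-1:ℤ) < 1 by omega)
      (t.le_shift 0 1 (-1) (by omega) A hA) hB g
    rw [IsZero.iff_id_eq_zero, hg, hg0]
    exact comp_zero
  have : IsIso u := (Triangle.isZero₃_iff_isIso₁ _ mem).1 hzB
  exact (t.le 0).prop_of_iso (asIso u) hA

end AuxLemmas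

set_option maxHeartbeats 2000000
set_option synthInstance.maxHeartbeats 1000000

/-- for a morphism `f` of the category `F = C ∩ ⁺C` of free objects, one has
`Coim_F f = Coim_C f = Im_C f` and `Im_F f = Im_{⁺C} f = Coim_{⁺C} f`, and `f` induces a
canonical morphism `Coim_F f ⟶ Im_F f`.  Concretely: the coimage of `f` computed in `C`
lies in `F` and satisfies the universal property of the coimage in `F` (coimage and image
agree in the abelian category `C`); dually the image computed in `⁺C` lies in `F` and is the
image in `F`; and `f` factors as `L ⟶ Coim_F f ⟶ Im_F f ⟶ L'`. -/
theorem free_coimage_image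
    (ϖ : O) (hϖ : Irreducible ϖ)
    (t t' : TStructure D) (c : TCohomology t)
    [Abelian (ObjectProperty.FullSubcategory (heartPred t))] [Abelian (ObjectProperty.FullSubcategory (heartPred t'))]
    -- `t'` is the tilt of `t` at the `ϖ`-torsion theory of its heart:
    (ht'le : ∀ X : D, t'.le 0 X ↔
      (t.le 1 X ∧ ∃ N : ℕ, (ϖ ^ N : O) • (𝟙 ((c.H 1).obj X)) = 0))
    (ht'ge : ∀ X : D, t'.ge 0 X ↔
      (t.ge 0 X ∧ Mono ((ϖ : O) • (𝟙 ((c.H 0).obj X)))))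
    (L L' : D) (hL : heartPred t L ∧ heartPred t' L)
    (hL' : heartPred t L' ∧ heartPred t' L') (f : L ⟶ L') :
    let fC : (⟨L, hL.1⟩ : ObjectProperty.FullSubcategory (heartPred t)) ⟶ ⟨L', hL'.1⟩ := ObjectProperty.homMk f
    let fP : (⟨L, hL.2⟩ : ObjectProperty.FullSubcategory (heartPred t')) ⟶ ⟨L', hL'.2⟩ := ObjectProperty.homMk f
    let CoimC : D := (Abelian.coimage fC).obj
    let ImP : D := (Abelian.image fP).obj
    let π : L ⟶ CoimC := (Abelian.coimage.π fC).hom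
    let ι : ImP ⟶ L' := (Abelian.image.ι fP).hom
    let κ : (kernel fC).obj ⟶ L := (kernel.ι fC).hom
    let ρ : L' ⟶ (cokernel fP).obj := (cokernel.π fP).hom
    -- Coim_C f = Im_C f and Im_{⁺C} f = Coim_{⁺C} f:
    (IsIso (Abelian.coimageImageComparison fC) ∧ IsIso (Abelian.coimageImageComparison fP)) ∧
    -- Coim_C f lies in F and is the coimage Coim_F f, i.e. the cokernel in F of Ker_F f ⟶ L:
    ((heartPred t CoimC ∧ heartPred t' CoimC) ∧
     (∀ (X : D), (heartPred t X ∧ heartPred t' X) → ∀ (g : L ⟶ X), κ ≫ g = 0 →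
        ∃! u : CoimC ⟶ X, π ≫ u = g)) ∧
    -- Im_{⁺C} f lies in F and is the image Im_F f, i.e. the kernel in F of L' ⟶ Coker_F f:
    ((heartPred t ImP ∧ heartPred t' ImP) ∧
     (∀ (X : D), (heartPred t X ∧ heartPred t' X) → ∀ (g : X ⟶ L'), g ≫ ρ = 0 →
        ∃! u : X ⟶ ImP, u ≫ ι = g)) ∧
    -- the canonical morphism Coim_F f ⟶ Im_F f:
    (∃ can : CoimC ⟶ ImP, π ≫ can ≫ ι = f) := by
  intro fC fP CoimC ImP π ι κ ρ
  have hCoimT : heartPred t CoimC := (Abelian.coimage fC).property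
  have hImT' : heartPred t' ImP := (Abelian.image fP).property
  -- the monomorphism Coim_C f ⟶ L' in C, seen at the level of D
  let mD : CoimC ⟶ L' := (Abelian.coimageImageComparison fC ≫ Abelian.image.ι fC).hom
  have hπm : π ≫ mD = f := congrArg (fun φ => φ.hom) (Abelian.coimage_image_factorisation fC)
  -- t'.le 0 for Coim_C f
  have hCoimLE' : t'.le 0 CoimC := by
    refine (ht'le CoimC).2 ⟨t.le_monotone (show (0:ℤ) ≤ 1 by omega) _ hCoimT.1, 0, ?_⟩
    have hz : IsZero ((c.H 1).obj CoimC) := (c.le_iff 0 CoimC).1 hCoimT.1 1 (by omega)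
    rw [pow_zero, one_smul]
    exact hz.eq_of_src _ _
  -- t'.ge 0 for Coim_C f
  have hCoimGE' : t'.ge 0 CoimC := by
    apply geZero_of_orth t' CoimC
    intro A hA a
    have hA0 : t.le 0 A := by
      have h1 : t'.le 0 (A⟦(-1:ℤ)⟧) := t'.le_shift (-1) (-1) 0 (by omega) A hA
      have h2 : t.le 1 (A⟦(-1:ℤ)⟧) := ((ht'le _).1 h1).1
      have h3 : t.le 0 ((A⟦(-1:ℤ)⟧)⟦(1:ℤ)⟧) := t.le_shift 1 1 0 (by omega) _ h2
      exact (t.le 0).prop_of_iso ((shiftEquiv D (1:ℤ)).counitIso.app A) h3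
    obtain ⟨A₀, A₁, hA₀, hA₁, u1, p1, w1, mem1⟩ := t.exists_triangle A (-1) 0 (by omega)
    have hA₁heart : heartPred t A₁ := by
      refine ⟨leZero_of_orth t A₁ ?_, hA₁⟩
      intro Y hY g
      obtain ⟨g', hg'⟩ := Triangle.yoneda_exact₃ _ mem1 g
        (tz t (show (0:ℤ) < 1 by omega) hA0 hY _)
      have hg'0 : g' = 0 := tz t (show (-2:ℤ) < 1 by omega)
        (t.le_shift (-1) 1 (-2) (by omega) A₀ hA₀) hY g'
      rw [hg', hg'0]
      exact comp_zero
    obtain ⟨a', ha'⟩ : ∃ a' : A₁ ⟶ CoimC, a = p1 ≫ a' := Triangle.yoneda_exact₂ _ mem1 a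
      (tz t (show (-1:ℤ) < 0 by omega) hA₀ hCoimT.2 _)
    have ham : a' ≫ mD = 0 := by
      have hpa : p1 ≫ a' ≫ mD = 0 := by
        rw [← Category.assoc, show p1 ≫ a' = a from ha'.symm]
        exact tz t' (show (-1:ℤ) < 0 by omega) hA hL'.2.2 _
      obtain ⟨v', hv'⟩ : ∃ v' : (A₀⟦(1:ℤ)⟧) ⟶ L', a' ≫ mD = w1 ≫ v' := Triangle.yoneda_exact₃ _ mem1 (a' ≫ mD) hpa
      have hv'0 : v' = 0 := tz t (show (-2:ℤ) < 0 by omega)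
        (t.le_shift (-1) 1 (-2) (by omega) A₀ hA₀) hL'.1.2 v'
      rw [hv', hv'0]
      exact comp_zero
    have ha'0 : a' = (0 : A₁ ⟶ CoimC) := by
      haveI : IsIso (Abelian.coimageImageComparison fC) := isIso_comparison_any _ fC _ _ _ _
      haveI : Mono (Abelian.coimageImageComparison fC ≫ Abelian.image.ι fC) :=
        mono_comp _ _
      have h6 : (ObjectProperty.homMk a' : (⟨A₁, hA₁heart⟩ : ObjectProperty.FullSubcategory (heartPred t)) ⟶ Abelian.coimage fC) = 0 := by
        rw [← cancel_mono (Abelian.coimageImageComparison fC ≫ Abelian.image.ι fC),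
          zero_comp]
        exact ObjectProperty.hom_ext _ (by rw [hom_zero_any]; exact ham)
      exact (congrArg (fun φ => φ.hom) h6).trans (hom_zero_any _ _)
    rw [ha', ha'0]
    exact comp_zero
  -- heart t membership for Im_{⁺C} f
  have hImT : heartPred t ImP := by
    have hge : t.ge 0 ImP := ((ht'ge ImP).1 hImT'.2).1
    refine ⟨?_, hge⟩
    apply leZero_of_orth t ImP
    intro Y hY g
    have hYge' : t'.ge 0 Y := by
      refine (ht'ge Y).2 ⟨t.ge_antitone (show (0:ℤ) ≤ 1 by omega) _ hY, ?_⟩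
      have hz : IsZero ((c.H 0).obj Y) := (c.ge_iff 1 Y).1 hY 0 (by omega)
      exact ⟨fun g h _ => hz.eq_of_tgt g h⟩
    obtain ⟨Y₀, Y₁, hY₀, hY₁, u2, p2, w2, mem2⟩ := t'.exists_triangle Y 0 1 (by omega)
    have hY₀heart : heartPred t' Y₀ := by
      refine ⟨hY₀, geZero_of_orth t' Y₀ ?_⟩
      intro A hA a
      obtain ⟨a2, ha2⟩ := Triangle.coyoneda_exact₂ _ (inv_rot_of_distTriang _ mem2) a
        (show a ≫ u2 = 0 from tz t' (show (-1:ℤ) < 0 by omega) hA hYge' (a ≫ u2))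
      have ha20 : a2 = 0 := tz t' (show (-1:ℤ) < 2 by omega) hA
        (t'.ge_shift 1 (-1) 2 (by omega) Y₁ hY₁) a2
      rw [ha2, ha20]
      exact zero_comp
    obtain ⟨g2, hg2⟩ : ∃ g2 : ImP ⟶ Y₀, g = g2 ≫ u2 := Triangle.coyoneda_exact₂ _ mem2 g
      (tz t' (show (0:ℤ) < 1 by omega) hImT'.1 hY₁ _)
    let e'D : L ⟶ ImP := (Abelian.factorThruImage fP).hom
    have he'g2 : e'D ≫ g2 = 0 := by
      have h8 : (e'D ≫ g2) ≫ u2 = 0 := by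
        rw [Category.assoc, show g2 ≫ u2 = g from hg2.symm]
        exact tz t (show (0:ℤ) < 1 by omega) hL.1.1 hY _
      obtain ⟨g3, hg3⟩ := Triangle.coyoneda_exact₂ _ (inv_rot_of_distTriang _ mem2)
        (e'D ≫ g2) h8
      have hg30 : g3 = 0 := tz t' (show (0:ℤ) < 2 by omega) hL.2.1
        (t'.ge_shift 1 (-1) 2 (by omega) Y₁ hY₁) g3
      rw [hg30] at hg3
      exact hg3.trans zero_comp
    have hg20 : g2 = (0 : ImP ⟶ Y₀) := by
      haveI : Epi (Abelian.factorThruImage fP) := epi_factorThruImage_any _ fP _ _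
      have h6 : (ObjectProperty.homMk g2 : Abelian.image fP ⟶ (⟨Y₀, hY₀heart⟩ : ObjectProperty.FullSubcategory (heartPred t'))) = 0 := by
        rw [← cancel_epi (Abelian.factorThruImage fP), comp_zero]
        exact ObjectProperty.hom_ext _ (by rw [hom_zero_any]; exact he'g2)
      exact (congrArg (fun φ => φ.hom) h6).trans (hom_zero_any _ _)
    rw [hg2, hg20]
    exact zero_comp
  -- the universal property of the coimage in F
  have hUnivC : ∀ (X : D), (heartPred t X ∧ heartPred t' X) → ∀ (g : L ⟶ X), κ ≫ g = 0 →
      ∃! u : CoimC ⟶ X, π ≫ u = g := by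
    intro X hX g hg
    have hg' : kernel.ι fC ≫
        (ObjectProperty.homMk g : (⟨L, hL.1⟩ : ObjectProperty.FullSubcategory (heartPred t)) ⟶ ⟨X, hX.1⟩) = 0 :=
      ObjectProperty.hom_ext _ (by rw [hom_zero_any]; exact hg)
    refine ⟨(cokernel.desc (kernel.ι fC) _ hg').hom, ?_, ?_⟩
    · exact congrArg (fun φ => φ.hom) (cokernel.π_desc (kernel.ι fC) _ hg')
    intro u hu
    have h7 : (ObjectProperty.homMk u : Abelian.coimage fC ⟶ (⟨X, hX.1⟩ : ObjectProperty.FullSubcategory (heartPred t)))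
        = cokernel.desc (kernel.ι fC) _ hg' := by
      rw [← cancel_epi (cokernel.π (kernel.ι fC)), cokernel.π_desc]
      exact ObjectProperty.hom_ext _ hu
    exact congrArg (fun φ => φ.hom) h7
  -- the universal property of the image in F
  have hUnivP : ∀ (X : D), (heartPred t X ∧ heartPred t' X) → ∀ (g : X ⟶ L'), g ≫ ρ = 0 →
      ∃! u : X ⟶ ImP, u ≫ ι = g := by
    intro X hX g hg
    have hg' : (ObjectProperty.homMk g : (⟨X, hX.2⟩ : ObjectProperty.FullSubcategory (heartPred t')) ⟶ ⟨L', hL'.2⟩) ≫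
        cokernel.π fP = 0 := ObjectProperty.hom_ext _ (by rw [hom_zero_any]; exact hg)
    refine ⟨(kernel.lift (cokernel.π fP) _ hg').hom, ?_, ?_⟩
    · exact congrArg (fun φ => φ.hom) (kernel.lift_ι (cokernel.π fP) _ hg')
    intro u hu
    have h7 : (ObjectProperty.homMk u : (⟨X, hX.2⟩ : ObjectProperty.FullSubcategory (heartPred t')) ⟶ Abelian.image fP)
        = kernel.lift (cokernel.π fP) _ hg' := by
      rw [← cancel_mono (kernel.ι (cokernel.π fP)), kernel.lift_ι]
      exact ObjectProperty.hom_ext _ hu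
    exact congrArg (fun φ => φ.hom) h7
  -- the canonical morphism
  have hqρ : mD ≫ ρ = 0 := by
    have hZ : heartPred t' ((cokernel fP).obj) := (cokernel fP).property
    have hZge : t.ge 0 ((cokernel fP).obj) := ((ht'ge _).1 hZ.2).1
    obtain ⟨Z₀, Z₁, hZ₀, hZ₁, u3, p3, w3, mem3⟩ :=
      t.exists_triangle ((cokernel fP).obj) 0 1 (by omega)
    have hZ₀heart : heartPred t Z₀ := by
      refine ⟨hZ₀, geZero_of_orth t Z₀ ?_⟩
      intro A hA a
      obtain ⟨a2, ha2⟩ := Triangle.coyoneda_exact₂ _ (inv_rot_of_distTriang _ mem3) a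
        (show a ≫ u3 = 0 from tz t (show (-1:ℤ) < 0 by omega) hA hZge (a ≫ u3))
      have ha20 : a2 = 0 := tz t (show (-1:ℤ) < 2 by omega) hA
        (t.ge_shift 1 (-1) 2 (by omega) Z₁ hZ₁) a2
      rw [ha2, ha20]
      exact zero_comp
    obtain ⟨w', hw'⟩ : ∃ w' : CoimC ⟶ Z₀, mD ≫ ρ = w' ≫ u3 := Triangle.coyoneda_exact₂ _ mem3 (mD ≫ ρ)
      (tz t (show (0:ℤ) < 1 by omega) hCoimT.1 hZ₁ _)
    have hπw' : π ≫ w' = 0 := by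
      have h9 : (π ≫ w') ≫ u3 = 0 := by
        rw [Category.assoc, show w' ≫ u3 = mD ≫ ρ from hw'.symm, ← Category.assoc, hπm]
        exact (congrArg (fun φ => φ.hom) (cokernel.condition fP)).trans (hom_zero_any _ _)
      obtain ⟨w'', hw''⟩ := Triangle.coyoneda_exact₂ _ (inv_rot_of_distTriang _ mem3)
        (π ≫ w') h9
      have hw''0 : w'' = 0 := tz t (show (0:ℤ) < 2 by omega) hL.1.1
        (t.ge_shift 1 (-1) 2 (by omega) Z₁ hZ₁) w''
      rw [hw''0] at hw''
      exact hw''.trans zero_comp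
    have hw'0 : w' = (0 : CoimC ⟶ Z₀) := by
      have h6 : (ObjectProperty.homMk w' : Abelian.coimage fC ⟶ (⟨Z₀, hZ₀heart⟩ : ObjectProperty.FullSubcategory (heartPred t))) = 0 := by
        rw [← cancel_epi (cokernel.π (kernel.ι fC)), comp_zero]
        exact ObjectProperty.hom_ext _ (by rw [hom_zero_any]; exact hπw')
      exact (congrArg (fun φ => φ.hom) h6).trans (hom_zero_any _ _)
    rw [hw', hw'0]
    exact zero_comp
  obtain ⟨can, hcan, -⟩ := hUnivP CoimC ⟨hCoimT, hCoimLE', hCoimGE'⟩ mD hqρ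
  refine ⟨⟨isIso_comparison_any _ fC _ _ _ _, isIso_comparison_any _ fP _ _ _ _⟩,
    ⟨⟨hCoimT, hCoimLE', hCoimGE'⟩, hUnivC⟩,
    ⟨⟨hImT, hImT'⟩, hUnivP⟩, can, ?_⟩
  rw [hcan]
  exact hπm
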